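/- Let s, v ∈ ℂ^N satisfy θ₁ ≤ ⟨s,v⟩/⟨s,s⟩ and ⟨v,v⟩/⟨s,v⟩ ≤ θ₂ with 0 < θ₁ < 1 < θ₂ and ⟨s,v⟩ real and positive. Then τ = ⟨s,s⟩/⟨s,v⟩ − sqrt((⟨s,s⟩/⟨s,v⟩)² − ⟨s,s⟩/⟨v,v⟩) satisfies 1/(2θ₂) < τ ≤ 1/θ₁. -/

import Mathlib

theorem stmt_5 (N : ℕ) (s v : EuclideanSpace ℂ (Fin N)) (hs : s ≠ 0) (hv : v ≠ 0)
    (θ₁ θ₂ : ℝ) (hθ₁ : 0 < θ₁) (hθ₁1 : θ₁ < 1) (hθ₂ : 1 < θ₂)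
    (sv : ℝ) (hsv : (inner ℂ s v : ℂ) = (sv : ℂ)) (hsvpos : 0 < sv)
    (h1 : θ₁ ≤ sv / ‖s‖ ^ 2) (h2 : ‖v‖ ^ 2 / sv ≤ θ₂)
    (τ : ℝ)
    (hτ : τ = ‖s‖ ^ 2 / sv - Real.sqrt ((‖s‖ ^ 2 / sv) ^ 2 - ‖s‖ ^ 2 / ‖v‖ ^ 2)) :
    1 / (2 * θ₂) < τ ∧ τ ≤ 1 / θ₁ := by
  have hsn : (0:ℝ) < ‖s‖ := norm_pos_iff.mpr hs
  have hvn : (0:ℝ) < ‖v‖ := norm_pos_iff.mpr hv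
  have hcs : sv ≤ ‖s‖ * ‖v‖ := by
    have h := norm_inner_le_norm (𝕜 := ℂ) s v
    rw [hsv] at h
    simpa [abs_of_pos hsvpos] using h
  set S := ‖s‖ ^ 2 with hS
  set V := ‖v‖ ^ 2 with hV
  have hSpos : 0 < S := by positivity
  have hVpos : 0 < V := by positivity
  set A := S / sv with hA
  set B := S / V with hB
  have hApos : 0 < A := by positivity
  have hBpos : 0 < B := by positivity
  have hsv2 : sv ^ 2 ≤ S * V := by nlinarith [hcs, hsvpos]
  have hab : B ≤ A ^ 2 := by
    rw [hA, hB, div_pow, div_le_div_iff₀ hVpos (by positivity)]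
    nlinarith [mul_le_mul_of_nonneg_left hsv2 hSpos.le]
  set r := Real.sqrt (A ^ 2 - B) with hr
  have hr0 : 0 ≤ r := Real.sqrt_nonneg _
  have hr2 : r ^ 2 = A ^ 2 - B := Real.sq_sqrt (by linarith)
  have hrlt : r < A := by
    rw [hr]
    exact Real.sqrt_lt' hApos |>.mpr (by nlinarith)
  have hτA : τ = A - r := hτ
  have hA2 : A = S / sv := hA
  have hB2 : B = S / V := hB
  clear_value r
  clear hτ hr
  clear_value A B
  clear hA hB
  clear_value S V
  have hθ₂pos : (0:ℝ) < θ₂ := by linarith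
  constructor
  · -- lower bound
    have h2' : V ≤ θ₂ * sv := by
      rw [div_le_iff₀ hsvpos] at h2; linarith
    have hAB : A ≤ θ₂ * B := by
      have hrw : θ₂ * B = (θ₂ * S) / V := by rw [hB2]; ring
      rw [hA2, hrw, div_le_div_iff₀ hsvpos hVpos]
      nlinarith [mul_le_mul_of_nonneg_left h2' hSpos.le]
    -- 2*A*τ = B + τ^2
    have key : 2 * A * τ = B + τ ^ 2 := by
      rw [hτA]; linear_combination -hr2
    rw [div_lt_iff₀ (by positivity)]
    have hτpos : 0 < τ := by rw [hτA]; linarith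
    nlinarith [key, hAB, mul_pos hθ₂pos (mul_pos hτpos hτpos), hApos, mul_pos hApos hτpos]
  · -- upper bound
    have hA1 : A ≤ 1 / θ₁ := by
      rw [le_div_iff₀ hθ₁]
      rw [le_div_iff₀ hSpos] at h1
      rw [hA2, div_mul_eq_mul_div, div_le_one hsvpos]
      linarith
    linarith [hr0]
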